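/- Let G be a K_5-free, 2K_3-free graph on n vertices in which every edge lies in a triangle, containing a 4-clique L = {u, v, u_1, v_1}. Then the induced subgraph G[V(G) \ L] has no edges, i.e., it is a union of isolated vertices. -/
import Mathlib


/-- Let G be a K_5-free, 2K_3-free graph in which every edge lies in a
triangle, containing a 4-clique L = {u, v, u₁, v₁}. Then the induced subgraph on
V(G) \ L has no edges. -/
theorem stmt12 {V : Type*} [DecidableEq V] (G : SimpleGraph V) (u v u₁ v₁ : V)
    (hK5 : G.CliqueFree 5)
    (h2K3 : ¬ ∃ s t : Finset V, G.IsNClique 3 s ∧ G.IsNClique 3 t ∧ Disjoint s t)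
    (hedge : ∀ x y : V, G.Adj x y → ∃ z : V, G.Adj x z ∧ G.Adj y z)
    (hL : G.IsNClique 4 ({u, v, u₁, v₁} : Finset V)) :
    ∀ a b : V, a ∉ ({u, v, u₁, v₁} : Finset V) → b ∉ ({u, v, u₁, v₁} : Finset V) →
      ¬ G.Adj a b := by
  intro a b ha hb hab
  set L : Finset V := {u, v, u₁, v₁} with hLdef
  obtain ⟨z, haz, hbz⟩ := hedge a b hab
  have habne : a ≠ b := hab.ne
  have hazne : a ≠ z := haz.ne
  have hbzne : b ≠ z := hbz.ne
  have htri : G.IsNClique 3 ({a, b, z} : Finset V) := by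
    constructor
    · intro x hx y hy hxy
      simp only [Finset.coe_insert, Set.mem_insert_iff, Finset.coe_singleton,
        Set.mem_singleton_iff] at hx hy
      rcases hx with rfl | rfl | rfl <;> rcases hy with rfl | rfl | rfl <;>
        first
          | exact absurd rfl hxy
          | assumption
          | exact hab.symm
          | exact haz.symm
          | exact hbz.symm
    · rw [Finset.card_insert_of_notMem (by simp [habne, hazne]),
        Finset.card_insert_of_notMem (by simp [hbzne])]
      simp
  by_cases hz : z ∈ L
  · -- take L.erase z as the other triangle
    have htri2 : G.IsNClique 3 (L.erase z) := by
      constructor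
      · exact hL.isClique.subset (by simp [Finset.erase_subset])
      · rw [Finset.card_erase_of_mem hz, hL.card_eq]
    refine h2K3 ⟨{a, b, z}, L.erase z, htri, htri2, ?_⟩
    rw [Finset.disjoint_left]
    intro x hx hxe
    have hxL : x ∈ L := Finset.mem_of_mem_erase hxe
    have hxz : x ≠ z := Finset.ne_of_mem_erase hxe
    simp only [Finset.mem_insert, Finset.mem_singleton] at hx
    rcases hx with rfl | rfl | rfl
    · exact ha hxL
    · exact hb hxL
    · exact hxz rfl
  · have htri2 : G.IsNClique 3 ({u, v, u₁} : Finset V) := by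
      constructor
      · exact hL.isClique.subset (by intro x hx; simp only [hLdef, Finset.coe_insert,
          Set.mem_insert_iff, Finset.coe_singleton, Set.mem_singleton_iff] at hx ⊢; tauto)
      · have hcard : ({u, v, u₁, v₁} : Finset V).card = 4 := hL.card_eq
        have h1 : ({u, v, u₁, v₁} : Finset V).card ≤ ({u, v, u₁} : Finset V).card + 1 := by
          have : ({u, v, u₁, v₁} : Finset V) ⊆ insert v₁ ({u, v, u₁} : Finset V) := by
            intro x hx
            simp only [Finset.mem_insert, Finset.mem_singleton] at hx ⊢
            tauto
          calc ({u, v, u₁, v₁} : Finset V).card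
              ≤ (insert v₁ ({u, v, u₁} : Finset V)).card := Finset.card_le_card this
            _ ≤ ({u, v, u₁} : Finset V).card + 1 := Finset.card_insert_le _ _
        have h2 : ({u, v, u₁} : Finset V).card ≤ 3 := by
          apply le_trans (Finset.card_insert_le _ _)
          apply Nat.succ_le_succ
          apply le_trans (Finset.card_insert_le _ _)
          simp
        omega
    refine h2K3 ⟨{a, b, z}, {u, v, u₁}, htri, htri2, ?_⟩
    rw [Finset.disjoint_left]
    intro x hx hx2
    have hxL : x ∈ L := by
      simp only [Finset.mem_insert, Finset.mem_singleton] at hx2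
      simp only [hLdef, Finset.mem_insert, Finset.mem_singleton]
      tauto
    simp only [Finset.mem_insert, Finset.mem_singleton] at hx
    rcases hx with rfl | rfl | rfl
    · exact ha hxL
    · exact hb hxL
    · exact hz hxL
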